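/- For independent and uniformly distributed matrices A ∈ F^{m×n} and B ∈ F^{n×p} over a finite field F, any SDMM scheme with N servers that is secure against any ℓ colluding servers and decodable from all N servers must satisfy the uplink cost bound K_UL ≥ N/(N−ℓ), where K_UL = (Σ_{i=1}^N |Ã_i| + |B̃_i|)/(n(m+p)). -/

import Mathlib

open Finset

variable {Ω : Type*} [Fintype Ω]

/-- Probability mass of the event `X = s` under the pmf `p` on a finite sample space. -/
noncomputable def pm (p : Ω → ℝ) {S : Type*} [DecidableEq S] (X : Ω → S) (s : S) : ℝ :=
  ∑ ω ∈ Finset.univ.filter (fun ω => X ω = s), p ω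

/-- Shannon entropy of a finite random variable `X` under the pmf `p`. -/
noncomputable def ent (p : Ω → ℝ) {S : Type*} [Fintype S] [DecidableEq S] (X : Ω → S) : ℝ :=
  -∑ s, pm p X s * Real.log (pm p X s)

/-- Conditional entropy `H(X | Y) = H(X, Y) - H(Y)`. -/
noncomputable def condEnt (p : Ω → ℝ) {S T : Type*} [Fintype S] [DecidableEq S]
    [Fintype T] [DecidableEq T] (X : Ω → S) (Y : Ω → T) : ℝ :=
  ent p (fun ω => (X ω, Y ω)) - ent p Y

/-- Mutual information `I(X ; Y) = H(X) + H(Y) - H(X, Y)`. -/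
noncomputable def mutInf (p : Ω → ℝ) {S T : Type*} [Fintype S] [DecidableEq S]
    [Fintype T] [DecidableEq T] (X : Ω → S) (Y : Ω → T) : ℝ :=
  ent p X + ent p Y - ent p (fun ω => (X ω, Y ω))

section Aux

variable (p : Ω → ℝ)

lemma pm_nonneg (hp0 : ∀ ω, 0 ≤ p ω) {S : Type*} [DecidableEq S] (X : Ω → S) (s : S) :
    0 ≤ pm p X s :=
  Finset.sum_nonneg fun ω _ => hp0 ω

lemma sum_pm {S : Type*} [Fintype S] [DecidableEq S] (X : Ω → S) :
    ∑ s, pm p X s = ∑ ω, p ω := by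
  unfold pm
  exact Finset.sum_fiberwise_of_maps_to (fun ω _ => mem_univ (X ω)) p

/-- Gibbs' inequality. -/
lemma gibbs {ι : Type*} [Fintype ι] (w v : ι → ℝ) (hw : ∀ i, 0 ≤ w i) (hv : ∀ i, 0 ≤ v i)
    (hvw : ∑ i, v i ≤ ∑ i, w i) (h : ∀ i, 0 < w i → 0 < v i) :
    ∑ i, w i * Real.log (v i) ≤ ∑ i, w i * Real.log (w i) := by
  have key : ∀ i, w i * Real.log (v i) - w i * Real.log (w i) ≤ v i - w i := by
    intro i
    rcases eq_or_lt_of_le (hw i) with h0 | h0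
    · simp only [← h0, zero_mul, sub_zero, sub_self, zero_sub, neg_zero]
      simpa using hv i
    · have hvi := h i h0
      calc w i * Real.log (v i) - w i * Real.log (w i)
          = w i * Real.log (v i / w i) := by
            rw [← mul_sub, Real.log_div hvi.ne' h0.ne']
        _ ≤ w i * (v i / w i - 1) :=
            mul_le_mul_of_nonneg_left (Real.log_le_sub_one_of_pos (div_pos hvi h0)) (hw i)
        _ = v i - w i := by field_simp
  have hsum := Finset.sum_le_sum (fun i (_ : i ∈ Finset.univ) => key i)
  rw [Finset.sum_sub_distrib, Finset.sum_sub_distrib] at hsum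
  linarith

/-- Marginal: `pm Y t = ∑ s, pm (X,Y) (s,t)`. -/
lemma pm_marg_snd {S T : Type*} [Fintype S] [DecidableEq S] [DecidableEq T]
    (X : Ω → S) (Y : Ω → T) (t : T) :
    pm p Y t = ∑ s, pm p (fun ω => (X ω, Y ω)) (s, t) := by
  have key : ∀ s : S, pm p (fun ω => (X ω, Y ω)) (s, t)
      = ∑ ω ∈ (Finset.univ.filter fun ω => Y ω = t).filter (fun ω => X ω = s), p ω := by
    intro s
    unfold pm
    rw [Finset.filter_filter]
    congr 1
    ext ω
    simp [Prod.ext_iff, and_comm]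
  symm
  calc ∑ s, pm p (fun ω => (X ω, Y ω)) (s, t)
      = ∑ s, ∑ ω ∈ (Finset.univ.filter fun ω => Y ω = t).filter (fun ω => X ω = s), p ω :=
        Finset.sum_congr rfl fun s _ => key s
    _ = ∑ ω ∈ Finset.univ.filter fun ω => Y ω = t, p ω :=
        Finset.sum_fiberwise_of_maps_to (fun ω _ => mem_univ (X ω)) p
    _ = pm p Y t := rfl

lemma pm_marg_fst {S T : Type*} [DecidableEq S] [Fintype T] [DecidableEq T]
    (X : Ω → S) (Y : Ω → T) (s : S) :
    pm p X s = ∑ t, pm p (fun ω => (X ω, Y ω)) (s, t) := by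
  have key : ∀ t : T, pm p (fun ω => (X ω, Y ω)) (s, t)
      = ∑ ω ∈ (Finset.univ.filter fun ω => X ω = s).filter (fun ω => Y ω = t), p ω := by
    intro t
    unfold pm
    rw [Finset.filter_filter]
    congr 1
    ext ω
    simp [Prod.ext_iff]
  symm
  calc ∑ t, pm p (fun ω => (X ω, Y ω)) (s, t)
      = ∑ t, ∑ ω ∈ (Finset.univ.filter fun ω => X ω = s).filter (fun ω => Y ω = t), p ω :=
        Finset.sum_congr rfl fun t _ => key t
    _ = ∑ ω ∈ Finset.univ.filter fun ω => X ω = s, p ω :=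
        Finset.sum_fiberwise_of_maps_to (fun ω _ => mem_univ (Y ω)) p
    _ = pm p X s := rfl

lemma pm_pair_le_snd (hp0 : ∀ ω, 0 ≤ p ω) {S T : Type*} [Fintype S] [DecidableEq S]
    [DecidableEq T] (X : Ω → S) (Y : Ω → T) (s : S) (t : T) :
    pm p (fun ω => (X ω, Y ω)) (s, t) ≤ pm p Y t := by
  rw [pm_marg_snd p X Y t]
  exact Finset.single_le_sum (f := fun s' => pm p (fun ω => (X ω, Y ω)) (s', t))
    (fun s' _ => pm_nonneg p hp0 _ _) (mem_univ s)

lemma pm_pair_le_fst (hp0 : ∀ ω, 0 ≤ p ω) {S T : Type*} [DecidableEq S]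
    [Fintype T] [DecidableEq T] (X : Ω → S) (Y : Ω → T) (s : S) (t : T) :
    pm p (fun ω => (X ω, Y ω)) (s, t) ≤ pm p X s := by
  rw [pm_marg_fst p X Y s]
  exact Finset.single_le_sum (f := fun t' => pm p (fun ω => (X ω, Y ω)) (s, t'))
    (fun t' _ => pm_nonneg p hp0 _ _) (mem_univ t)

/-- Entropy is invariant under injective maps. -/
lemma ent_comp_inj {S T : Type*} [Fintype S] [DecidableEq S] [Fintype T] [DecidableEq T]
    (X : Ω → S) (g : S → T) (hg : Function.Injective g) :
    ent p (fun ω => g (X ω)) = ent p X := by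
  unfold ent
  congr 1
  have him : ∀ s, pm p (fun ω => g (X ω)) (g s) = pm p X s := by
    intro s
    unfold pm
    congr 1
    ext ω
    simp [hg.eq_iff]
  have h1 : ∑ t, pm p (fun ω => g (X ω)) t * Real.log (pm p (fun ω => g (X ω)) t)
      = ∑ t ∈ Finset.univ.image g,
          pm p (fun ω => g (X ω)) t * Real.log (pm p (fun ω => g (X ω)) t) := by
    refine (Finset.sum_subset (Finset.subset_univ _) fun t _ ht => ?_).symm
    have hz : pm p (fun ω => g (X ω)) t = 0 := by
      unfold pm
      refine Finset.sum_eq_zero fun ω hω => ?_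
      exfalso
      refine ht ?_
      simp only [Finset.mem_filter, Finset.mem_univ, true_and] at hω
      exact Finset.mem_image.mpr ⟨X ω, Finset.mem_univ _, hω⟩
    rw [hz]
    simp
  rw [h1, Finset.sum_image (fun x _ y _ h => hg h)]
  exact Finset.sum_congr rfl fun s _ => by rw [him s]

/-- `H(Y) ≤ H(X, Y)`. -/
lemma ent_le_ent_pair (hp0 : ∀ ω, 0 ≤ p ω) {S T : Type*} [Fintype S] [DecidableEq S]
    [Fintype T] [DecidableEq T] (X : Ω → S) (Y : Ω → T) :
    ent p Y ≤ ent p (fun ω => (X ω, Y ω)) := by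
  unfold ent
  rw [neg_le_neg_iff]
  calc ∑ st : S × T, pm p (fun ω => (X ω, Y ω)) st * Real.log (pm p (fun ω => (X ω, Y ω)) st)
      = ∑ t, ∑ s, pm p (fun ω => (X ω, Y ω)) (s, t)
          * Real.log (pm p (fun ω => (X ω, Y ω)) (s, t)) := by
        rw [Fintype.sum_prod_type, Finset.sum_comm]
    _ ≤ ∑ t, ∑ s, pm p (fun ω => (X ω, Y ω)) (s, t) * Real.log (pm p Y t) := by
        refine Finset.sum_le_sum fun t _ => Finset.sum_le_sum fun s _ => ?_
        rcases eq_or_lt_of_le (pm_nonneg p hp0 (fun ω => (X ω, Y ω)) (s, t)) with h0 | h0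
        · rw [← h0]; simp
        · exact mul_le_mul_of_nonneg_left
            (Real.log_le_log h0 (pm_pair_le_snd p hp0 X Y s t)) (le_of_lt h0)
    _ = ∑ t, pm p Y t * Real.log (pm p Y t) := by
        refine Finset.sum_congr rfl fun t _ => ?_
        rw [← Finset.sum_mul, ← pm_marg_snd]

/-- Subadditivity: `H(X, Y) ≤ H(X) + H(Y)`. -/
lemma ent_pair_le_add (hp0 : ∀ ω, 0 ≤ p ω) (hp1 : ∑ ω, p ω = 1)
    {S T : Type*} [Fintype S] [DecidableEq S] [Fintype T] [DecidableEq T]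
    (X : Ω → S) (Y : Ω → T) :
    ent p (fun ω => (X ω, Y ω)) ≤ ent p X + ent p Y := by
  have hgibbs : ∑ st : S × T,
        pm p (fun ω => (X ω, Y ω)) st * Real.log (pm p X st.1 * pm p Y st.2)
      ≤ ∑ st : S × T, pm p (fun ω => (X ω, Y ω)) st
          * Real.log (pm p (fun ω => (X ω, Y ω)) st) := by
    refine gibbs (pm p (fun ω => (X ω, Y ω))) (fun st => pm p X st.1 * pm p Y st.2)
      (fun st => pm_nonneg p hp0 _ _)
      (fun st => mul_nonneg (pm_nonneg p hp0 _ _) (pm_nonneg p hp0 _ _)) ?_ ?_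
    · rw [Fintype.sum_prod_type, ← Finset.sum_mul_sum, sum_pm, sum_pm, sum_pm, hp1]
      norm_num
    · intro st hst
      exact mul_pos (lt_of_lt_of_le hst (pm_pair_le_fst p hp0 X Y st.1 st.2))
        (lt_of_lt_of_le hst (pm_pair_le_snd p hp0 X Y st.1 st.2))
  have hsplit : ∑ st : S × T,
        pm p (fun ω => (X ω, Y ω)) st * Real.log (pm p X st.1 * pm p Y st.2)
      = ∑ st : S × T, (pm p (fun ω => (X ω, Y ω)) st * Real.log (pm p X st.1)
          + pm p (fun ω => (X ω, Y ω)) st * Real.log (pm p Y st.2)) := by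
    refine Finset.sum_congr rfl fun st _ => ?_
    rcases eq_or_lt_of_le (pm_nonneg p hp0 (fun ω => (X ω, Y ω)) st) with h0 | h0
    · rw [← h0]; ring
    · have h1 : 0 < pm p X st.1 := lt_of_lt_of_le h0 (pm_pair_le_fst p hp0 X Y st.1 st.2)
      have h2 : 0 < pm p Y st.2 := lt_of_lt_of_le h0 (pm_pair_le_snd p hp0 X Y st.1 st.2)
      rw [Real.log_mul h1.ne' h2.ne', mul_add]
  have hX : ∑ st : S × T, pm p (fun ω => (X ω, Y ω)) st * Real.log (pm p X st.1)
      = ∑ s, pm p X s * Real.log (pm p X s) := by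
    rw [Fintype.sum_prod_type]
    refine Finset.sum_congr rfl fun s _ => ?_
    have hrfl : ∀ y, pm p (fun ω => (X ω, Y ω)) (s, y) * Real.log (pm p X (s, y).1)
        = pm p (fun ω => (X ω, Y ω)) (s, y) * Real.log (pm p X s) := fun y => rfl
    rw [Finset.sum_congr rfl fun y _ => hrfl y, ← Finset.sum_mul, ← pm_marg_fst]
  have hY : ∑ st : S × T, pm p (fun ω => (X ω, Y ω)) st * Real.log (pm p Y st.2)
      = ∑ t, pm p Y t * Real.log (pm p Y t) := by
    rw [Fintype.sum_prod_type, Finset.sum_comm]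
    refine Finset.sum_congr rfl fun t _ => ?_
    have hrfl : ∀ x, pm p (fun ω => (X ω, Y ω)) (x, t) * Real.log (pm p Y (x, t).2)
        = pm p (fun ω => (X ω, Y ω)) (x, t) * Real.log (pm p Y t) := fun x => rfl
    rw [Finset.sum_congr rfl fun x _ => hrfl x, ← Finset.sum_mul, ← pm_marg_snd]
  rw [Finset.sum_add_distrib, hX, hY] at hsplit
  unfold ent
  linarith

/-- `H(X) ≤ log |S|`. -/
lemma ent_le_log_card (hp0 : ∀ ω, 0 ≤ p ω) (hp1 : ∑ ω, p ω = 1)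
    {S : Type*} [Fintype S] [DecidableEq S] [Nonempty S] (X : Ω → S) :
    ent p X ≤ Real.log (Fintype.card S) := by
  have hc : (0 : ℝ) < Fintype.card S := by
    exact_mod_cast Fintype.card_pos
  have hgibbs : ∑ s : S, pm p X s * Real.log ((Fintype.card S : ℝ)⁻¹)
      ≤ ∑ s : S, pm p X s * Real.log (pm p X s) := by
    refine gibbs (pm p X) (fun _ => (Fintype.card S : ℝ)⁻¹)
      (fun s => pm_nonneg p hp0 _ _) (fun _ => inv_nonneg.mpr hc.le) ?_
      (fun _ _ => inv_pos.mpr hc)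
    rw [Finset.sum_const, sum_pm, hp1, nsmul_eq_mul, Finset.card_univ]
    rw [mul_inv_cancel₀ hc.ne']
  have hconst : ∑ s : S, pm p X s * Real.log ((Fintype.card S : ℝ)⁻¹)
      = -Real.log (Fintype.card S) := by
    rw [← Finset.sum_mul, sum_pm, hp1, one_mul, Real.log_inv]
  unfold ent
  linarith

/-- `H(f(X)) ≤ H(X)`. -/
lemma ent_comp_le (hp0 : ∀ ω, 0 ≤ p ω) {S T : Type*} [Fintype S] [DecidableEq S]
    [Fintype T] [DecidableEq T] (X : Ω → S) (g : S → T) :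
    ent p (fun ω => g (X ω)) ≤ ent p X := by
  have h1 : ent p (fun ω => (X ω, g (X ω))) = ent p X :=
    ent_comp_inj p X (fun s => (s, g s)) (fun x y h => (Prod.mk.injEq _ _ _ _ ▸ h).1)
  calc ent p (fun ω => g (X ω)) ≤ ent p (fun ω => (X ω, g (X ω))) :=
        ent_le_ent_pair p hp0 X (fun ω => g (X ω))
    _ = ent p X := h1

end Aux

set_option synthInstance.maxSize 1024
set_option synthInstance.maxHeartbeats 400000
set_option maxHeartbeats 1600000

/-- For independent uniformly distributed matrices `A ∈ F^{m×n}`,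
`B ∈ F^{n×p}` (so that `H(A,B) = n(m+p)·log|F|`), any SDMM scheme with `N` servers
that is decodable from all `N` servers and secure against any `ℓ` colluding servers
satisfies the uplink cost bound `K_UL = (Σᵢ |Ãᵢ| + |B̃ᵢ|)/(n(m+p)) ≥ N/(N-ℓ)`. -/
theorem sdmm_uplink_bound
    {Ω : Type*} [Fintype Ω] (p : Ω → ℝ)
    (hp0 : ∀ ω, 0 ≤ p ω) (hp1 : ∑ ω, p ω = 1)
    {F : Type*} [Field F] [Fintype F] [DecidableEq F]
    (m n q N ℓ : ℕ) (hn : 0 < n) (hmq : 0 < m + q) (hℓN : ℓ < N)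
    (A : Ω → Matrix (Fin m) (Fin n) F) (B : Ω → Matrix (Fin n) (Fin q) F)
    (a b : Fin N → ℕ)
    (At : (i : Fin N) → Ω → (Fin (a i) → F))
    (Bt : (i : Fin N) → Ω → (Fin (b i) → F))
    -- A and B are independent and uniform, hence `H(A,B) = n(m+p) log |F|`:
    (huniform : ent p (fun ω => (A ω, B ω))
      = (n : ℝ) * ((m : ℝ) + (q : ℝ)) * Real.log (Fintype.card F))
    -- decodability: `H(A,B | Ã_{[1:N]}, B̃_{[1:N]}) = 0`
    (hdec : condEnt p (fun ω => (A ω, B ω))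
      (fun ω => ((fun i => At i ω), (fun i => Bt i ω))) = 0)
    -- security: `I(Ã_L, B̃_L ; A, B) = 0` for every `L` of size `ℓ`
    (hsec : ∀ L : Finset (Fin N), L.card = ℓ →
      mutInf p (fun ω => (fun i : {x // x ∈ L} => (At i.1 ω, Bt i.1 ω)))
        (fun ω => (A ω, B ω)) = 0) :
    ((∑ i, (a i + b i) : ℕ) : ℝ) / ((n : ℝ) * ((m : ℝ) + (q : ℝ)))
      ≥ (N : ℝ) / ((N : ℝ) - (ℓ : ℝ)) := by
  have hlogF : 0 < Real.log (Fintype.card F) := by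
    apply Real.log_pos
    exact_mod_cast Fintype.one_lt_card
  -- Key per-collusion-set bound
  have key : ∀ L : Finset (Fin N), L.card = ℓ →
      (n : ℝ) * ((m : ℝ) + (q : ℝ)) ≤ ∑ i ∈ Lᶜ, ((a i + b i : ℕ) : ℝ) := by
    intro L hL
    -- security: H(U) + H(W) = H(U, W)
    have hs : ent p (fun ω => (fun i : {x // x ∈ L} => (At i.1 ω, Bt i.1 ω)))
          + ent p (fun ω => (A ω, B ω))
        = ent p (fun ω => ((fun i : {x // x ∈ L} => (At i.1 ω, Bt i.1 ω)), (A ω, B ω))) := by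
      have h := hsec L hL
      unfold mutInf at h
      beta_reduce at h
      linarith
    -- decodability: H(W, V) = H(V)
    have hd : ent p (fun ω => ((A ω, B ω), ((fun i => At i ω), (fun i => Bt i ω))))
        = ent p (fun ω => ((fun i => At i ω), (fun i => Bt i ω))) := by
      have h := hdec
      unfold condEnt at h
      beta_reduce at h
      linarith
    -- (U, W) is a function of (W, V)
    have h1 : ent p (fun ω => ((fun i : {x // x ∈ L} => (At i.1 ω, Bt i.1 ω)), (A ω, B ω)))
        ≤ ent p (fun ω => ((A ω, B ω), ((fun i => At i ω), (fun i => Bt i ω)))) :=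
      ent_comp_le p hp0
        (fun ω => ((A ω, B ω), ((fun i => At i ω), (fun i => Bt i ω))))
        (fun wv => ((fun i : {x // x ∈ L} => (wv.2.1 i.1, wv.2.2 i.1)), wv.1))
    -- V determines (U, Vc) bijectively
    have h2 : ent p (fun ω => ((fun i => At i ω), (fun i => Bt i ω)))
        = ent p (fun ω => ((fun i : {x // x ∈ L} => (At i.1 ω, Bt i.1 ω)),
            (fun i : {x // x ∈ Lᶜ} => (At i.1 ω, Bt i.1 ω)))) := by
      refine (ent_comp_inj p (fun ω => ((fun i => At i ω), (fun i => Bt i ω)))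
        (fun v => ((fun i : {x // x ∈ L} => (v.1 i.1, v.2 i.1)),
                   (fun i : {x // x ∈ Lᶜ} => (v.1 i.1, v.2 i.1)))) ?_).symm
      rintro ⟨f, g⟩ ⟨f', g'⟩ h
      have h1' := congrArg Prod.fst h
      have h2' := congrArg Prod.snd h
      simp only at h1' h2'
      have hfg : ∀ i : Fin N, f i = f' i ∧ g i = g' i := by
        intro i
        by_cases hi : i ∈ L
        · have hc := congrFun h1' ⟨i, hi⟩
          exact ⟨congrArg Prod.fst hc, congrArg Prod.snd hc⟩
        · have hc := congrFun h2' ⟨i, Finset.mem_compl.mpr hi⟩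
          exact ⟨congrArg Prod.fst hc, congrArg Prod.snd hc⟩
      exact Prod.ext (funext fun i => (hfg i).1) (funext fun i => (hfg i).2)
    have h3 : ent p (fun ω => ((fun i : {x // x ∈ L} => (At i.1 ω, Bt i.1 ω)),
            (fun i : {x // x ∈ Lᶜ} => (At i.1 ω, Bt i.1 ω))))
        ≤ ent p (fun ω => (fun i : {x // x ∈ L} => (At i.1 ω, Bt i.1 ω)))
          + ent p (fun ω => (fun i : {x // x ∈ Lᶜ} => (At i.1 ω, Bt i.1 ω))) :=
      ent_pair_le_add p hp0 hp1 _ _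
    -- card of the codomain of Vc
    have hcard : (Fintype.card ((i : {x // x ∈ Lᶜ}) → (Fin (a i.1) → F) × (Fin (b i.1) → F)) : ℝ)
        = (Fintype.card F : ℝ) ^ (∑ i ∈ Lᶜ, (a i + b i)) := by
      have hnat : ∏ i : {x // x ∈ Lᶜ},
            Fintype.card ((Fin (a i.1) → F) × (Fin (b i.1) → F))
          = Fintype.card F ^ ∑ i ∈ Lᶜ, (a i + b i) := by
        rw [← Finset.prod_pow_eq_pow_sum,
          ← Finset.prod_coe_sort Lᶜ (fun i => Fintype.card F ^ (a i + b i))]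
        refine Finset.prod_congr rfl fun i _ => ?_
        rw [Fintype.card_prod, Fintype.card_fun, Fintype.card_fun, Fintype.card_fin,
          Fintype.card_fin, pow_add]
      rw [Fintype.card_pi, hnat]
      push_cast
      ring
    have h4 : ent p (fun ω => (fun i : {x // x ∈ Lᶜ} => (At i.1 ω, Bt i.1 ω)))
        ≤ (∑ i ∈ Lᶜ, ((a i + b i : ℕ) : ℝ)) * Real.log (Fintype.card F) := by
      calc ent p (fun ω => (fun i : {x // x ∈ Lᶜ} => (At i.1 ω, Bt i.1 ω)))
          ≤ Real.log
            (Fintype.card ((i : {x // x ∈ Lᶜ}) → (Fin (a i.1) → F) × (Fin (b i.1) → F))) :=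
            ent_le_log_card p hp0 hp1 _
        _ = (∑ i ∈ Lᶜ, ((a i + b i : ℕ) : ℝ)) * Real.log (Fintype.card F) := by
            rw [hcard, Real.log_pow]
            push_cast
            ring
    have hWbound : ent p (fun ω => (A ω, B ω))
        ≤ (∑ i ∈ Lᶜ, ((a i + b i : ℕ) : ℝ)) * Real.log (Fintype.card F) := by
      linarith
    rw [huniform] at hWbound
    have := le_of_mul_le_mul_right hWbound hlogF
    linarith
  -- Averaging over all collusion sets L of size ℓ
  have hsum : (Nat.choose N ℓ : ℝ) * ((n : ℝ) * ((m : ℝ) + (q : ℝ)))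
      ≤ (Nat.choose (N - 1) ℓ : ℝ) * ∑ i, ((a i + b i : ℕ) : ℝ) := by
    have h5 : ∑ _L ∈ Finset.powersetCard ℓ (Finset.univ : Finset (Fin N)),
        ((n : ℝ) * ((m : ℝ) + (q : ℝ)))
        ≤ ∑ L ∈ Finset.powersetCard ℓ (Finset.univ : Finset (Fin N)),
          ∑ i ∈ Lᶜ, ((a i + b i : ℕ) : ℝ) := by
      refine Finset.sum_le_sum fun L hL => key L ?_
      rw [Finset.mem_powersetCard] at hL
      exact hL.2
    rw [Finset.sum_const, Finset.card_powersetCard, Finset.card_univ, Fintype.card_fin,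
      nsmul_eq_mul] at h5
    have h6 : ∑ L ∈ Finset.powersetCard ℓ (Finset.univ : Finset (Fin N)),
        ∑ i ∈ Lᶜ, ((a i + b i : ℕ) : ℝ)
        = (Nat.choose (N - 1) ℓ : ℝ) * ∑ i, ((a i + b i : ℕ) : ℝ) := by
      have hstep : ∀ L ∈ Finset.powersetCard ℓ (Finset.univ : Finset (Fin N)),
          ∑ i ∈ Lᶜ, ((a i + b i : ℕ) : ℝ)
          = ∑ i : Fin N, if i ∉ L then ((a i + b i : ℕ) : ℝ) else 0 := by
        intro L _
        rw [← Finset.sum_filter]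
        congr 1
        ext i
        simp [Finset.mem_compl]
      rw [Finset.sum_congr rfl hstep, Finset.sum_comm, Finset.mul_sum]
      refine Finset.sum_congr rfl fun i _ => ?_
      have hfil : (Finset.powersetCard ℓ (Finset.univ : Finset (Fin N))).filter
            (fun L => i ∉ L)
          = Finset.powersetCard ℓ ((Finset.univ : Finset (Fin N)).erase i) := by
        ext L
        simp only [Finset.mem_filter, Finset.mem_powersetCard, Finset.subset_erase]
        tauto
      rw [← Finset.sum_filter, hfil, Finset.sum_const, nsmul_eq_mul,
        Finset.card_powersetCard, Finset.card_erase_of_mem (Finset.mem_univ i),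
        Finset.card_univ, Fintype.card_fin]
    rw [h6] at h5
    exact h5
  -- numeric conclusion
  have hC0 : 0 < (Nat.choose (N - 1) ℓ : ℝ) := by
    exact_mod_cast Nat.choose_pos (by omega)
  have hid : (N - ℓ) * Nat.choose N ℓ = N * Nat.choose (N - 1) ℓ := by
    have hN1 : N - 1 + 1 = N := by omega
    have h := Nat.add_one_mul_choose_eq (N - 1) ℓ
    rw [hN1] at h
    have h' := Nat.choose_succ_right_eq N ℓ
    calc (N - ℓ) * Nat.choose N ℓ = Nat.choose N ℓ * (N - ℓ) := Nat.mul_comm _ _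
      _ = Nat.choose N (ℓ + 1) * (ℓ + 1) := h'.symm
      _ = N * Nat.choose (N - 1) ℓ := h.symm
  have hnmq : (0 : ℝ) < (n : ℝ) * ((m : ℝ) + (q : ℝ)) := by
    have h1 : (0 : ℝ) < (m : ℝ) + (q : ℝ) := by exact_mod_cast hmq
    have h2 : (0 : ℝ) < (n : ℝ) := by exact_mod_cast hn
    positivity
  have hNl : (0 : ℝ) < (N : ℝ) - (ℓ : ℝ) := by
    have : (ℓ : ℝ) < (N : ℝ) := by exact_mod_cast hℓN
    linarith
  rw [ge_iff_le, div_le_div_iff₀ hNl hnmq]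
  have hidR : ((N : ℝ) - (ℓ : ℝ)) * (Nat.choose N ℓ : ℝ)
      = (N : ℝ) * (Nat.choose (N - 1) ℓ : ℝ) := by
    have hcast : ((N - ℓ : ℕ) : ℝ) = (N : ℝ) - (ℓ : ℝ) := by
      push_cast [Nat.cast_sub hℓN.le]
      ring
    rw [← hcast]
    exact_mod_cast congrArg (fun x : ℕ => (x : ℝ)) hid
  have hsimp : ((∑ i, (a i + b i) : ℕ) : ℝ) = ∑ i, ((a i + b i : ℕ) : ℝ) := by
    push_cast
    rfl
  rw [hsimp]
  nlinarith [hsum, hC0, hNl, hidR, mul_le_mul_of_nonneg_left hsum hNl.le]
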